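/- arXiv:1508.01533 — 2 statements merged into one kernel-verified Lean document; each statement's English description precedes it below -/
import Mathlib

section
/- Let $(\varphi_n)_{n\ge 1}$ be a sequence of functions on $[1,\infty)$ satisfying $\varphi_n(1)=1$, $0 \le \varphi_n \le 1$, and $\varphi_n(x_1) \le (\varphi_n(x_2))^{(x_1-1)/(x_2-1)}$ for all $1 < x_1 < x_2$. Suppose $\psi$ is a right-continuous nonincreasing function on $(1,\infty)$ and $\varphi_{n_k}(x) \to \psi(x)$ at each continuity point $x$ of $\psi$ along some subsequence $n_k \to \infty$. Then $\psi$ is continuous on $(1,\infty)$. -/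
open Filter Set Topology

private lemma aux_neBot {D : Set ℝ} (hD : D.Countable) (x : ℝ) :
    (𝓝[>] x ⊓ 𝓟 Dᶜ).NeBot := by
  have hd : Dense Dᶜ := hD.dense_compl ℝ
  have heq : 𝓝[>] x ⊓ 𝓟 Dᶜ = 𝓝[Ioi x ∩ Dᶜ] x := by
    rw [nhdsWithin, nhdsWithin, inf_assoc, inf_principal]
  rw [heq, ← mem_closure_iff_nhdsWithin_neBot, Metric.mem_closure_iff]
  intro ε hε
  obtain ⟨z, hz, hz2⟩ := hd.exists_between (show x < x + ε by linarith)
  refine ⟨z, ⟨hz2.1, hz⟩, ?_⟩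
  rw [Real.dist_eq, abs_lt]
  exact ⟨by linarith [hz2.2], by linarith [hz2.1]⟩

theorem stmt1 (φ : ℕ → ℝ → ℝ) (ψ : ℝ → ℝ) (n : ℕ → ℕ)
    (hone : ∀ m, φ m 1 = 1)
    (hbdd : ∀ m, ∀ x ∈ Set.Ici (1 : ℝ), φ m x ∈ Set.Icc (0 : ℝ) 1)
    (hHolder : ∀ m, ∀ x₁ x₂ : ℝ, 1 < x₁ → x₁ < x₂ →
      φ m x₁ ≤ (φ m x₂) ^ ((x₁ - 1) / (x₂ - 1)))
    (hψrc : ∀ x ∈ Set.Ioi (1 : ℝ), ContinuousWithinAt ψ (Set.Ici x) x)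
    (hψmono : AntitoneOn ψ (Set.Ioi (1 : ℝ)))
    (hn : StrictMono n)
    (hconv : ∀ x ∈ Set.Ioi (1 : ℝ), ContinuousAt ψ x →
      Tendsto (fun k => φ (n k) x) atTop (nhds (ψ x))) :
    ContinuousOn ψ (Set.Ioi (1 : ℝ)) := by
  classical
  set D : Set ℝ := {x | x ∈ Ioi (1 : ℝ) ∧ ¬ ContinuousAt ψ x} with hDdef
  -- D is countable
  have hDc : D.Countable := by
    have hj : ∀ j : ℕ,
        {x : ℝ | ¬ ContinuousAt (fun y => ψ (max y (1 + 1 / (j + 1)))) x}.Countable := by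
      intro j
      have haj : (1 : ℝ) < 1 + 1 / (j + 1) := by
        have : (0 : ℝ) < 1 / (j + 1) := by positivity
        linarith
      have hanti : Antitone (fun y => ψ (max y (1 + 1 / (j + 1)))) := fun a b hab =>
        hψmono (mem_Ioi.2 (lt_of_lt_of_le haj (le_max_right _ _)))
          (mem_Ioi.2 (lt_of_lt_of_le haj (le_max_right _ _)))
          (max_le_max hab le_rfl)
      exact hanti.countable_not_continuousAt
    refine (Set.countable_iUnion hj).mono ?_
    intro x hx
    obtain ⟨hx1, hx2⟩ := hx
    obtain ⟨j, hjx⟩ := exists_nat_one_div_lt (sub_pos.2 (mem_Ioi.1 hx1))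
    have hjx' : 1 + 1 / ((j : ℝ) + 1) < x := by
      push_cast at hjx ⊢; linarith
    refine mem_iUnion.2 ⟨j, ?_⟩
    have hev : (fun y => ψ (max y (1 + 1 / ((j : ℝ) + 1)))) =ᶠ[𝓝 x] ψ := by
      filter_upwards [Ioi_mem_nhds hjx'] with y hy
      rw [max_eq_left (le_of_lt hy)]
    simp only [mem_setOf_eq]
    intro hc
    exact hx2 (by push_cast at hev ⊢; exact hc.congr hev)
  have hF : ∀ x : ℝ, (𝓝[>] x ⊓ 𝓟 Dᶜ).NeBot := fun x => aux_neBot hDc x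
  have hcont : ∀ u : ℝ, u ∈ Dᶜ → 1 < u → ContinuousAt ψ u := by
    intro u hu h1
    by_contra h
    exact hu ⟨mem_Ioi.2 h1, h⟩
  -- ψ tends to ψ x along the from-the-right filter restricted to continuity points
  have hψright : ∀ x : ℝ, 1 < x → Tendsto ψ (𝓝[>] x ⊓ 𝓟 Dᶜ) (𝓝 (ψ x)) := by
    intro x hx
    refine (hψrc x (mem_Ioi.2 hx)).mono_left ?_
    exact le_trans inf_le_left (nhdsWithin_mono _ Ioi_subset_Ici_self)
  have hmemIoi : ∀ x : ℝ, ∀ᶠ u in 𝓝[>] x ⊓ 𝓟 Dᶜ, u ∈ Ioi x :=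
    fun x => (eventually_mem_nhdsWithin).filter_mono inf_le_left
  have hmemDc : ∀ x : ℝ, ∀ᶠ u in 𝓝[>] x ⊓ 𝓟 Dᶜ, u ∈ Dᶜ :=
    fun x => (eventually_principal.2 fun _ h => h).filter_mono inf_le_right
  -- key inequality at continuity points
  have key1 : ∀ u v : ℝ, 1 < u → u < v → ContinuousAt ψ u → ContinuousAt ψ v →
      ψ u ≤ ψ v ^ ((u - 1) / (v - 1)) := by
    intro u v hu huv hcu hcv
    have hu' := hconv u (mem_Ioi.2 hu) hcu
    have hv' := hconv v (mem_Ioi.2 (hu.trans huv)) hcv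
    have hc : 0 < (u - 1) / (v - 1) := div_pos (by linarith) (by linarith)
    refine le_of_tendsto_of_tendsto' hu' ?_ (fun k => hHolder (n k) u v hu huv)
    exact (Real.continuousAt_rpow_const (ψ v) _ (Or.inr hc.le)).tendsto.comp hv'
  -- inner extension: y arbitrary, v a continuity point
  have key2 : ∀ y v : ℝ, 1 < y → y < v → ContinuousAt ψ v →
      ψ y ≤ ψ v ^ ((y - 1) / (v - 1)) := by
    intro y v hy hyv hcv
    haveI := hF y
    have hc : 0 < (y - 1) / (v - 1) := div_pos (by linarith) (by linarith)
    have hexp : Tendsto (fun u : ℝ => (u - 1) / (v - 1)) (𝓝[>] y ⊓ 𝓟 Dᶜ)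
        (𝓝 ((y - 1) / (v - 1))) := by
      refine Tendsto.mono_left ?_ (le_trans inf_le_left nhdsWithin_le_nhds)
      exact ((continuous_id.sub continuous_const).div_const _).tendsto y
    have hrhs : Tendsto (fun u : ℝ => ψ v ^ ((u - 1) / (v - 1))) (𝓝[>] y ⊓ 𝓟 Dᶜ)
        (𝓝 (ψ v ^ ((y - 1) / (v - 1)))) :=
      (Real.continuousAt_rpow (ψ v, (y - 1) / (v - 1)) (Or.inr hc)).tendsto.comp
        (tendsto_const_nhds.prodMk_nhds hexp)
    refine le_of_tendsto_of_tendsto (hψright y hy) hrhs ?_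
    have hlt : ∀ᶠ u in 𝓝[>] y ⊓ 𝓟 Dᶜ, u < v :=
      (eventually_nhdsWithin_of_eventually_nhds (Filter.Tendsto.eventually_lt_const hyv
        tendsto_id)).filter_mono inf_le_left
    filter_upwards [hmemIoi y, hmemDc y, hlt] with u hu1 hu2 hu3
    exact key1 u v (hy.trans hu1) hu3 (hcont u hu2 (hy.trans hu1)) hcv
  -- full extension
  have key3 : ∀ y x : ℝ, 1 < y → y < x → ψ y ≤ ψ x ^ ((y - 1) / (x - 1)) := by
    intro y x hy hyx
    haveI := hF x
    have hc : 0 < (y - 1) / (x - 1) := div_pos (by linarith) (by linarith)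
    have hexp : Tendsto (fun v : ℝ => (y - 1) / (v - 1)) (𝓝[>] x ⊓ 𝓟 Dᶜ)
        (𝓝 ((y - 1) / (x - 1))) := by
      refine Tendsto.mono_left ?_ (le_trans inf_le_left nhdsWithin_le_nhds)
      exact tendsto_const_nhds.div ((continuous_id.sub continuous_const).tendsto x)
        (by intro h; linarith [sub_eq_zero.1 h] : x - 1 ≠ 0)
    have hrhs : Tendsto (fun v : ℝ => ψ v ^ ((y - 1) / (v - 1))) (𝓝[>] x ⊓ 𝓟 Dᶜ)
        (𝓝 (ψ x ^ ((y - 1) / (x - 1)))) :=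
      (Real.continuousAt_rpow (ψ x, (y - 1) / (x - 1)) (Or.inr hc)).tendsto.comp
        ((hψright x (hy.trans hyx)).prodMk_nhds hexp)
    refine le_of_tendsto_of_tendsto tendsto_const_nhds hrhs ?_
    filter_upwards [hmemIoi x, hmemDc x] with v hv1 hv2
    exact key2 y v hy (hyx.trans hv1) (hcont v hv2 ((hy.trans hyx).trans hv1))
  -- conclude continuity
  intro x hx
  have hx1 : (1 : ℝ) < x := mem_Ioi.1 hx
  refine ContinuousAt.continuousWithinAt ?_
  rw [continuousAt_iff_continuous_left'_right']
  refine ⟨?_, (continuousWithinAt_Ioi_iff_Ici).2 (hψrc x hx)⟩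
  -- left continuity by squeeze
  have hmemIoo : ∀ᶠ u in 𝓝[<] x, u ∈ Ioo 1 x :=
    Ioo_mem_nhdsLT_of_mem ⟨hx1, le_refl x⟩
  have hlow : ∀ᶠ u in 𝓝[<] x, ψ x ≤ ψ u := by
    filter_upwards [hmemIoo] with u hu
    exact hψmono (mem_Ioi.2 hu.1) hx hu.2.le
  have hup : ∀ᶠ u in 𝓝[<] x, ψ u ≤ ψ x ^ ((u - 1) / (x - 1)) := by
    filter_upwards [hmemIoo] with u hu
    exact key3 u x hu.1 hu.2
  have hxne : x - 1 ≠ 0 := by intro h; linarith [sub_eq_zero.1 h]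
  have hexp : Tendsto (fun u : ℝ => (u - 1) / (x - 1)) (𝓝[<] x) (𝓝 1) := by
    have h0 : Tendsto (fun u : ℝ => (u - 1) / (x - 1)) (𝓝 x) (𝓝 ((x - 1) / (x - 1))) :=
      ((continuous_id.sub continuous_const).div_const _).tendsto x
    rw [div_self hxne] at h0
    exact h0.mono_left nhdsWithin_le_nhds
  have hrt : Tendsto (fun u : ℝ => ψ x ^ ((u - 1) / (x - 1))) (𝓝[<] x) (𝓝 (ψ x)) := by
    have h1 : Tendsto (fun u : ℝ => ψ x ^ ((u - 1) / (x - 1))) (𝓝[<] x) (𝓝 (ψ x ^ (1 : ℝ))) :=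
      (Real.continuousAt_rpow (ψ x, 1) (Or.inr one_pos)).tendsto.comp
        (tendsto_const_nhds.prodMk_nhds hexp)
    rwa [Real.rpow_one] at h1
  exact tendsto_of_tendsto_of_tendsto_of_le_of_le' tendsto_const_nhds hrt hlow hup
end

section
/- Let $Y_1,\dots,Y_n$ be i.i.d. positive random variables with distribution function $G$, let $\alpha > 1$, and let $\phi_\alpha(t) = \mathbb{E}(Y_1^\alpha e^{-t Y_1})$ and $\phi_0(t) = \mathbb{E}(e^{-t Y_1})$. Then $\mathbb{E}\left[\frac{\sum_{i=1}^n Y_i^{\alpha}}{(\sum_{i=1}^n Y_i)^{\alpha}}\right] = \frac{n}{\Gamma(\alpha)} \int_0^\infty t^{\alpha-1} \phi_\alpha(t) \phi_0(t)^{n-1} \, \mathrm{d}t$. -/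
open MeasureTheory ProbabilityTheory Filter Finset Real
open scoped ENNReal

-- helper 1: factorization
lemma fact1 {Ω ι : Type*} [MeasurableSpace Ω] [DecidableEq ι] (μ : Measure Ω) [IsProbabilityMeasure μ]
    (f : ι → Ω → ℝ) (hf : ∀ i, Measurable (f i))
    (hindep : iIndepFun f μ)
    (g : ι → ℝ → ℝ≥0∞) (hg : ∀ i, Measurable (g i)) (s : Finset ι) :
    ∫⁻ ω, ∏ j ∈ s, g j (f j ω) ∂μ = ∏ j ∈ s, ∫⁻ ω, g j (f j ω) ∂μ := by
  classical
  induction s using Finset.induction with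
  | empty => simp
  | @insert i s hi ih =>
    have hIndep0 := hindep.indepFun_finset {i} s (by simpa using hi) hf
    have hφ : Measurable (fun v : {x // x ∈ ({i} : Finset ι)} → ℝ => g i (v ⟨i, by simp⟩)) :=
      (hg i).comp (measurable_pi_apply _)
    have hψ : Measurable (fun v : {x // x ∈ s} → ℝ => ∏ j ∈ s.attach, g j (v j)) :=
      Finset.measurable_prod _ fun j _ => (hg j).comp (measurable_pi_apply _)
    have hIndep := hIndep0.comp hφ hψ
    have he1 : ((fun v : {x // x ∈ ({i} : Finset ι)} → ℝ => g i (v ⟨i, by simp⟩)) ∘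
        (fun a (k : {x // x ∈ ({i} : Finset ι)}) => f k a)) = fun ω => g i (f i ω) := rfl
    have he2 : ((fun v : {x // x ∈ s} → ℝ => ∏ j ∈ s.attach, g j (v j)) ∘
        (fun a (k : {x // x ∈ s}) => f k a)) = fun ω => ∏ j ∈ s, g j (f j ω) := by
      ext ω
      simp only [Function.comp_apply]
      exact Finset.prod_attach s (fun j => g j (f j ω))
    rw [he1, he2] at hIndep
    simp_rw [Finset.prod_insert hi]; rw [← ih]
    have := lintegral_mul_eq_lintegral_mul_lintegral_of_indepFun
      (f := fun ω => g i (f i ω)) (g := fun ω => ∏ j ∈ s, g j (f j ω))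
      ((hg i).comp (hf i)) (Finset.measurable_prod _ fun j _ => (hg j).comp (hf j)) hIndep
    simpa using this

-- helper 2: joint law is the product measure
lemma fact2 {Ω : Type*} [MeasurableSpace Ω] (μ : Measure Ω) [IsProbabilityMeasure μ]
    {n : ℕ} (Y : Fin n → Ω → ℝ) (hmeas : ∀ i, Measurable (Y i))
    (hindep : iIndepFun Y μ) :
    μ.map (fun ω j => Y j ω) = Measure.pi (fun j => μ.map (Y j)) := by
  haveI : ∀ j, IsProbabilityMeasure (μ.map (Y j)) :=
    fun j => Measure.isProbabilityMeasure_map (hmeas j).aemeasurable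
  refine Eq.symm (Measure.pi_eq (μ := fun j => μ.map (Y j)) fun s hs => ?_)
  rw [Measure.map_apply (measurable_pi_lambda _ fun j => hmeas j) (MeasurableSet.univ_pi hs)]
  have hpre : (fun ω j => Y j ω) ⁻¹' Set.pi Set.univ s = ⋂ j, Y j ⁻¹' s j := by
    ext ω; simp [Set.mem_pi]
  rw [hpre, hindep.iIndep.meas_iInter fun j => ⟨s j, hs j, rfl⟩]
  exact Finset.prod_congr rfl fun j _ => (Measure.map_apply (hmeas j) (hs j)).symm

-- helper 3: permutation invariance of iid product measure
lemma fact3 {n : ℕ} (m : Measure ℝ) [IsProbabilityMeasure m] (e : Equiv.Perm (Fin n)) :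
    (Measure.pi (fun _ : Fin n => m)).map (fun x => x ∘ e) = Measure.pi (fun _ : Fin n => m) := by
  refine Eq.symm (Eq.symm ?_); refine Eq.symm (Measure.pi_eq (μ := fun _ => m) fun s hs => ?_)
  have hm : Measurable (fun x : Fin n → ℝ => x ∘ e) :=
    measurable_pi_lambda _ fun j => measurable_pi_apply _
  rw [Measure.map_apply hm (MeasurableSet.univ_pi hs)]
  have hpre : (fun x : Fin n → ℝ => x ∘ e) ⁻¹' Set.pi Set.univ s
      = Set.pi Set.univ (fun k => s (e.symm k)) := by
    ext x
    simp only [Set.mem_preimage, Set.mem_pi, Set.mem_univ, true_imp_iff, Function.comp_apply]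
    constructor
    · intro h k; simpa using h (e.symm k)
    · intro h j; simpa using h (e j)
  rw [hpre, Measure.pi_pi]
  exact Equiv.prod_comp e.symm (fun j => m (s j))

-- helper 4: exchangeability
lemma fact4 {Ω : Type*} [MeasurableSpace Ω] (μ : Measure Ω) [IsProbabilityMeasure μ]
    {n : ℕ} (Y : Fin n → Ω → ℝ) (hmeas : ∀ i, Measurable (Y i))
    (hindep : iIndepFun Y μ)
    (hident : ∀ i j, IdentDistrib (Y i) (Y j) μ μ) (i₀ : Fin n)
    (F : (Fin n → ℝ) → ℝ≥0∞) (hF : Measurable F) (e : Equiv.Perm (Fin n)) :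
    ∫⁻ ω, F (fun j => Y j ω) ∂μ = ∫⁻ ω, F (fun j => Y (e j) ω) ∂μ := by
  have hV : Measurable (fun ω j => Y j ω : Ω → Fin n → ℝ) :=
    measurable_pi_lambda _ fun j => hmeas j
  have hmap : μ.map (fun ω j => Y j ω) = Measure.pi (fun _ : Fin n => μ.map (Y i₀)) := by
    rw [fact2 μ Y hmeas hindep]
    congr 1
    funext j
    exact (hident j i₀).map_eq
  haveI : IsProbabilityMeasure (μ.map (Y i₀)) :=
    Measure.isProbabilityMeasure_map (hmeas i₀).aemeasurable
  have hme : Measurable (fun x : Fin n → ℝ => x ∘ e) :=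
    measurable_pi_lambda _ fun j => measurable_pi_apply _
  calc ∫⁻ ω, F (fun j => Y j ω) ∂μ
      = ∫⁻ x, F x ∂(μ.map (fun ω j => Y j ω)) := (lintegral_map hF hV).symm
    _ = ∫⁻ x, F x ∂((Measure.pi (fun _ : Fin n => μ.map (Y i₀))).map (fun x => x ∘ e)) := by
        rw [hmap, fact3]
    _ = ∫⁻ x, F (x ∘ e) ∂(Measure.pi (fun _ : Fin n => μ.map (Y i₀))) := lintegral_map hF hme
    _ = ∫⁻ x, F (x ∘ e) ∂(μ.map (fun ω j => Y j ω)) := by rw [hmap]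
    _ = ∫⁻ ω, F ((fun j => Y j ω) ∘ e) ∂μ := lintegral_map (hF.comp hme) hV
    _ = ∫⁻ ω, F (fun j => Y (e j) ω) ∂μ := rfl

-- helper 5: pointwise Gamma identity
lemma fact5 {α y s : ℝ} (hα : 1 < α) (hy : 0 < y) (hs : 0 < s) :
    ENNReal.ofReal (y ^ α / s ^ α) = ENNReal.ofReal (1 / Real.Gamma α) *
      ∫⁻ t in Set.Ioi (0:ℝ), ENNReal.ofReal (t ^ (α - 1) * (y ^ α * Real.exp (-t * s))) := by
  have hα0 : 0 < α := by linarith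
  have hΓ : 0 < Real.Gamma α := Real.Gamma_pos_of_pos hα0
  have hInt : IntegrableOn (fun t : ℝ => t ^ (α - 1) * Real.exp (-(s * t))) (Set.Ioi 0) := by
    have := integrableOn_rpow_mul_exp_neg_mul_rpow (s := α - 1) (p := 1) (b := s)
      (by linarith) zero_lt_one hs
    simpa [Real.rpow_one, neg_mul] using this
  have h1 : ∫⁻ t in Set.Ioi (0:ℝ), ENNReal.ofReal (t ^ (α - 1) * Real.exp (-(s * t)))
      = ENNReal.ofReal ((1 / s) ^ α * Real.Gamma α) := by
    rw [← Real.integral_rpow_mul_exp_neg_mul_Ioi hα0 hs,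
      ← ofReal_integral_eq_lintegral_ofReal hInt ?_]
    filter_upwards [ae_restrict_mem measurableSet_Ioi] with t ht
    have : (0:ℝ) < t := ht
    positivity
  have h2 : ∫⁻ t in Set.Ioi (0:ℝ), ENNReal.ofReal (t ^ (α - 1) * (y ^ α * Real.exp (-t * s)))
      = ENNReal.ofReal (y ^ α) * ENNReal.ofReal ((1 / s) ^ α * Real.Gamma α) := by
    rw [← h1, ← lintegral_const_mul' _ _ ENNReal.ofReal_ne_top]
    refine lintegral_congr fun t => ?_
    rw [← ENNReal.ofReal_mul (by positivity)]
    congr 1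
    ring_nf
  rw [h2, ← ENNReal.ofReal_mul (by positivity), ← ENNReal.ofReal_mul (by positivity)]
  congr 1
  rw [one_div s, Real.inv_rpow hs.le]
  field_simp
  try ring

theorem stmt4 {Ω : Type*} [MeasureSpace Ω] (μ : Measure Ω) [IsProbabilityMeasure μ]
    (n : ℕ) (hn : 0 < n)
    (Y : Fin n → Ω → ℝ)
    (hmeas : ∀ i, Measurable (Y i))
    (hindep : iIndepFun Y μ)
    (hident : ∀ i j, IdentDistrib (Y i) (Y j) μ μ)
    (hpos : ∀ i, ∀ᵐ ω ∂μ, 0 < Y i ω)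
    (α : ℝ) (hα : 1 < α) (i₀ : Fin n)
    (φα φ0 : ℝ → ℝ≥0∞)
    (hφα : ∀ t : ℝ, φα t = ∫⁻ ω, ENNReal.ofReal (Y i₀ ω ^ α * Real.exp (-t * Y i₀ ω)) ∂μ)
    (hφ0 : ∀ t : ℝ, φ0 t = ∫⁻ ω, ENNReal.ofReal (Real.exp (-t * Y i₀ ω)) ∂μ) :
    ∫⁻ ω, ENNReal.ofReal ((∑ i, Y i ω ^ α) / (∑ i, Y i ω) ^ α) ∂μ =
      ENNReal.ofReal (n / Real.Gamma α) *
        ∫⁻ t in Set.Ioi (0 : ℝ),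
          ENNReal.ofReal (t ^ (α - 1)) * φα t * (φ0 t) ^ (n - 1) := by
  classical
  have hα0 : 0 < α := by linarith
  have hΓ : 0 < Real.Gamma α := Real.Gamma_pos_of_pos hα0
  have hpos' : ∀ᵐ ω ∂μ, ∀ j, 0 < Y j ω := ae_all_iff.2 hpos
  set S : Ω → ℝ := fun ω => ∑ j, Y j ω with hS
  have hSmeas : Measurable S := Finset.measurable_sum _ fun j _ => hmeas j
  have hterm : ∀ i : Fin n, Measurable fun ω => ENNReal.ofReal (Y i ω ^ α / S ω ^ α) := by
    intro i
    have := hmeas i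
    have := hSmeas
    fun_prop
  -- Step 1: split the sum
  have step1 : ∫⁻ ω, ENNReal.ofReal ((∑ i, Y i ω ^ α) / (∑ i, Y i ω) ^ α) ∂μ
      = ∑ i : Fin n, ∫⁻ ω, ENNReal.ofReal (Y i ω ^ α / S ω ^ α) ∂μ := by
    rw [← lintegral_finset_sum _ (fun i _ => hterm i)]
    refine lintegral_congr_ae ?_
    filter_upwards [hpos'] with ω hω
    have hSpos : 0 < S ω := Finset.sum_pos (fun j _ => hω j) ⟨i₀, Finset.mem_univ i₀⟩
    rw [show ((∑ i, Y i ω ^ α) / (∑ i, Y i ω) ^ α) = ∑ i, Y i ω ^ α / S ω ^ α from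
      Finset.sum_div _ _ _]
    exact ENNReal.ofReal_sum_of_nonneg fun i _ =>
      div_nonneg (Real.rpow_nonneg (hω i).le α) (Real.rpow_nonneg hSpos.le α)
  -- Step 2: exchangeability
  have step2 : ∀ i : Fin n, ∫⁻ ω, ENNReal.ofReal (Y i ω ^ α / S ω ^ α) ∂μ
      = ∫⁻ ω, ENNReal.ofReal (Y i₀ ω ^ α / S ω ^ α) ∂μ := by
    intro i
    have hF : Measurable (fun x : Fin n → ℝ => ENNReal.ofReal (x i ^ α / (∑ j, x j) ^ α)) := by
      have h1 : Measurable (fun x : Fin n → ℝ => x i) := measurable_pi_apply i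
      have h2 : Measurable (fun x : Fin n → ℝ => ∑ j, x j) :=
        Finset.measurable_sum _ fun j _ => measurable_pi_apply j
      fun_prop
    have h := fact4 μ Y hmeas hindep hident i₀ _ hF (Equiv.swap i i₀)
    have hsum : ∀ ω, (∑ j, Y ((Equiv.swap i i₀) j) ω) = S ω := fun ω =>
      Equiv.sum_comp (Equiv.swap i i₀) (fun j => Y j ω)
    simpa [Equiv.swap_apply_left, hsum] using h
  -- Step 3: Gamma representation pointwise
  have step3 : ∫⁻ ω, ENNReal.ofReal (Y i₀ ω ^ α / S ω ^ α) ∂μ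
      = ENNReal.ofReal (1 / Real.Gamma α) * ∫⁻ ω, (∫⁻ t in Set.Ioi (0:ℝ),
          ENNReal.ofReal (t ^ (α - 1) * (Y i₀ ω ^ α * Real.exp (-t * S ω)))) ∂μ := by
    rw [← lintegral_const_mul' _ _ ENNReal.ofReal_ne_top]
    refine lintegral_congr_ae ?_
    filter_upwards [hpos'] with ω hω
    have hSpos : 0 < S ω := Finset.sum_pos (fun j _ => hω j) ⟨i₀, Finset.mem_univ i₀⟩
    exact fact5 hα (hω i₀) hSpos
  -- Step 4: Fubini
  have hUnc : Measurable (fun p : Ω × ℝ =>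
      ENNReal.ofReal (p.2 ^ (α - 1) * (Y i₀ p.1 ^ α * Real.exp (-p.2 * S p.1)))) := by
    have := hmeas i₀
    have := hSmeas
    fun_prop
  have step4 : ∫⁻ ω, (∫⁻ t in Set.Ioi (0:ℝ),
        ENNReal.ofReal (t ^ (α - 1) * (Y i₀ ω ^ α * Real.exp (-t * S ω)))) ∂μ
      = ∫⁻ t in Set.Ioi (0:ℝ), (∫⁻ ω,
        ENNReal.ofReal (t ^ (α - 1) * (Y i₀ ω ^ α * Real.exp (-t * S ω))) ∂μ) := by
    exact lintegral_lintegral_swap hUnc.aemeasurable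
  -- Step 5: factorization of the inner integral
  have step5 : ∀ t ∈ Set.Ioi (0:ℝ), ∫⁻ ω,
      ENNReal.ofReal (t ^ (α - 1) * (Y i₀ ω ^ α * Real.exp (-t * S ω))) ∂μ
      = ENNReal.ofReal (t ^ (α - 1)) * φα t * φ0 t ^ (n - 1) := by
    intro t ht
    set g : Fin n → ℝ → ℝ≥0∞ := fun j u => if j = i₀ then
        ENNReal.ofReal (u ^ α * Real.exp (-t * u)) else ENNReal.ofReal (Real.exp (-t * u))
      with hgdef
    have hgmeas : ∀ j, Measurable (g j) := by
      intro j
      by_cases hj : j = i₀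
      · have : g j = fun u => ENNReal.ofReal (u ^ α * Real.exp (-t * u)) := by
          funext u; simp [hgdef, hj]
        rw [this]; fun_prop
      · have : g j = fun u => ENNReal.ofReal (Real.exp (-t * u)) := by
          funext u; simp [hgdef, hj]
        rw [this]; fun_prop
    have key : ∫⁻ ω, ENNReal.ofReal (t ^ (α - 1) * (Y i₀ ω ^ α * Real.exp (-t * S ω))) ∂μ
        = ENNReal.ofReal (t ^ (α - 1)) * ∫⁻ ω, ∏ j, g j (Y j ω) ∂μ := by
      rw [← lintegral_const_mul' _ _ ENNReal.ofReal_ne_top]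
      refine lintegral_congr_ae ?_
      filter_upwards [hpos'] with ω hω
      have hexp : Real.exp (-t * S ω) = ∏ j, Real.exp (-t * Y j ω) := by
        rw [hS]
        simp only []
        rw [Finset.mul_sum, Real.exp_sum]
      have hprod : Y i₀ ω ^ α * Real.exp (-t * S ω)
          = ∏ j, (if j = i₀ then Y j ω ^ α * Real.exp (-t * Y j ω)
              else Real.exp (-t * Y j ω)) := by
        rw [hexp, ← Finset.mul_prod_erase Finset.univ
            (fun j => Real.exp (-t * Y j ω)) (Finset.mem_univ i₀),
          ← Finset.mul_prod_erase Finset.univ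
            (fun j => (if j = i₀ then Y j ω ^ α * Real.exp (-t * Y j ω)
              else Real.exp (-t * Y j ω))) (Finset.mem_univ i₀), if_pos rfl, ← mul_assoc]
        refine congrArg _ (Finset.prod_congr rfl fun j hj => ?_)
        rw [if_neg (Finset.ne_of_mem_erase hj)]
      rw [ENNReal.ofReal_mul (Real.rpow_nonneg (le_of_lt ht) _), hprod,
        ENNReal.ofReal_prod_of_nonneg]
      · refine congrArg _ (Finset.prod_congr rfl fun j _ => ?_)
        rw [hgdef]
        simp only [apply_ite ENNReal.ofReal]
      · intro j _
        split_ifs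
        · exact mul_nonneg (Real.rpow_nonneg (hω j).le α) (Real.exp_pos _).le
        · exact (Real.exp_pos _).le
    rw [key, fact1 μ Y hmeas hindep g hgmeas Finset.univ,
      ← Finset.mul_prod_erase Finset.univ _ (Finset.mem_univ i₀)]
    have h1 : ∫⁻ ω, g i₀ (Y i₀ ω) ∂μ = φα t := by
      rw [hφα]; simp only [hgdef, if_pos rfl]
    have h2' : ∀ j ∈ Finset.univ.erase i₀, ∫⁻ ω, g j (Y j ω) ∂μ = φ0 t := by
      intro j hj
      have hj' : j ≠ i₀ := Finset.ne_of_mem_erase hj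
      have hgj : g j = fun u => ENNReal.ofReal (Real.exp (-t * u)) := by
        funext u; rw [hgdef]; simp [hj']
      rw [hgj, hφ0]
      have hu : Measurable (fun u : ℝ => ENNReal.ofReal (Real.exp (-t * u))) := by fun_prop
      exact ((hident j i₀).comp hu).lintegral_eq
    have h2 : ∏ j ∈ Finset.univ.erase i₀, ∫⁻ ω, g j (Y j ω) ∂μ = φ0 t ^ (n - 1) := by
      rw [Finset.prod_congr rfl h2', Finset.prod_const,
        Finset.card_erase_of_mem (Finset.mem_univ i₀), Finset.card_univ, Fintype.card_fin]
    rw [h1, h2, mul_assoc]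
  -- Assemble
  rw [step1]
  rw [Finset.sum_congr rfl (fun i _ => step2 i), Finset.sum_const, Finset.card_univ,
    Fintype.card_fin, step3, step4]
  rw [setLIntegral_congr_fun measurableSet_Ioi step5]
  rw [nsmul_eq_mul, ← mul_assoc]
  congr 1
  rw [ENNReal.ofReal_div_of_pos hΓ, ENNReal.ofReal_div_of_pos hΓ, ENNReal.ofReal_one,
    ENNReal.ofReal_natCast]
  rw [mul_one_div]
end
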